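/- Let a_n := |BWTS(n)| be the number of recursively labelled red and white trees on {1,…,n}. Then a₁ = 1 and for all n ≥ 2, a_n = 2·a_{n−1} + 2·∑_{k=1}^{n−1} a_k · a_{n−k}; equivalently the ordinary generating series F = ∑_{n≥1} a_n x^n ∈ ℚ[[x]] satisfies F = x + 2xF + 2F². In particular a₂ = 4, a₃ = 24, a₄ = 176. -/

import Mathlib

open scoped Classical

/- A labelled red and white tree on `{1,…,n}` is encoded by the (laminar) family of the
sets `S(z)` of all labels carried by the subtree rooted at each node `z`; this determines
the tree completely (children of a node are the maximal proper members of the family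
below it, its own labels are those not appearing in its children, and the condition that
an unlabelled node has at least two children is automatic). -/

/-- The children of the node `S` in the family `fam`: maximal members strictly below `S`. -/
def childrenF (fam : Finset (Finset ℕ)) (S : Finset ℕ) : Finset (Finset ℕ) :=
  fam.filter fun T => T ⊂ S ∧ ∀ U ∈ fam, T ⊂ U → ¬ U ⊂ S

/-- The set of labels carried by the node `S` itself. -/
def labelsOf (fam : Finset (Finset ℕ)) (S : Finset ℕ) : Finset ℕ :=
  S \ (childrenF fam S).biUnion id

/-- `fam` encodes a labelled red and white tree on `{1,…,n}` (`fam ∈ BWTSL(n)`). -/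
def IsRWTree (n : ℕ) (fam : Finset (Finset ℕ)) : Prop :=
  (∀ S ∈ fam, S.Nonempty ∧ S ⊆ Finset.Icc 1 n) ∧
  Finset.Icc 1 n ∈ fam ∧
  ∀ S ∈ fam, ∀ T ∈ fam, S ⊆ T ∨ T ⊆ S ∨ Disjoint S T

/-- The tree is recursively labelled: the total label set of every subtree is an
interval of consecutive integers. -/
def IsRecursive (fam : Finset (Finset ℕ)) : Prop :=
  ∀ S ∈ fam, ∃ a b : ℕ, S = Finset.Icc a b

/-- The node `S` is red: it carries no label and all of its children are white. -/
def IsRed (fam : Finset (Finset ℕ)) (S : Finset ℕ) : Prop :=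
  labelsOf fam S = ∅ ∧ ∀ T ∈ childrenF fam S, ¬ IsRed fam T
termination_by S.card
decreasing_by
  rename_i hT
  exact Finset.card_lt_card (Finset.mem_filter.mp hT).2.1

/-- Relabelling of the first tree in `T₁ ∘ₓ T₂` (`n` the arity of `T₂`): labels `j > x`
are shifted by `n - 1` and the label `x` becomes the whole block `{x,…,x+n-1}`. -/
def relabL (x n : ℕ) (T : Finset ℕ) : Finset ℕ :=
  T.biUnion fun j =>
    if j < x then {j} else if j = x then Finset.Icc x (x + n - 1) else {j + n - 1}

/-- Relabelling of the second tree in `T₁ ∘ₓ T₂`: labels are shifted by `x - 1`. -/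
def relabR (x : ℕ) (T : Finset ℕ) : Finset ℕ := T.image fun j => x + j - 1

/-- The composition `T₁ ∘ₓ T₂` of labelled red and white trees (in the laminar-family
encoding), `n` being the arity of `T₂`.  The four cases correspond to the rules
(R1), (R3), (R2) and (W) respectively:  if the root of `T₂` is red then the result is
`T₂` when `T₁` is the single node labelled `x` (R1); the node `z` of `T₁` containing `x`
is deleted and the children of the root of `T₂` are attached to its parent when `z` is a
leaf whose only label is `x` (R3); otherwise the root of `T₂` becomes a new child of `z`
(R2).  If the root of `T₂` is not red, it is merged with `z` (W). -/
noncomputable def rwCompose (n x : ℕ) (fam₁ fam₂ : Finset (Finset ℕ)) :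
    Finset (Finset ℕ) :=
  let B : Finset ℕ := Finset.Icc x (x + n - 1)
  let f₁ := fam₁.image (relabL x n)
  let f₂ := fam₂.image (relabR x)
  if IsRed fam₂ (Finset.Icc 1 n) then
    if fam₁ = {{x}} then f₂
    else if {x} ∈ fam₁ then (f₁ \ {B}) ∪ (f₂ \ {B})
    else f₁ ∪ f₂
  else f₁ ∪ (f₂ \ {B})

/-- The unit: the single node labelled `{1}`. -/
def unitT : Finset (Finset ℕ) := {{1}}
/-- `T_≺`: white root labelled `{1}` with a single white child labelled `{2}`. -/
def Tprec : Finset (Finset ℕ) := {{1, 2}, {2}}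
/-- `T_≻`: white root labelled `{2}` with a single white child labelled `{1}`. -/
def Tsucc : Finset (Finset ℕ) := {{1, 2}, {1}}
/-- `T_∘`: a single white node labelled `{1,2}`. -/
def Tmid : Finset (Finset ℕ) := {{1, 2}}
/-- `T_⊙`: red empty root with two white children labelled `{1}` and `{2}`. -/
def Tdot : Finset (Finset ℕ) := {{1, 2}, {1}, {2}}

/-- `aCount n = |BWTS(n)|`, the number of recursively labelled red and white trees on
`{1,…,n}`. -/
noncomputable def aCount (n : ℕ) : ℕ :=
  Set.ncard {fam : Finset (Finset ℕ) | IsRWTree n fam ∧ IsRecursive fam}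

section Aux

/-- Laminar family. -/
def Lam (fam : Finset (Finset ℕ)) : Prop :=
  ∀ S ∈ fam, ∀ T ∈ fam, S ⊆ T ∨ T ⊆ S ∨ Disjoint S T

/-- `S` is a nonempty interval inside `[lo,hi]`. -/
def IsIntvIn (lo hi : ℕ) (S : Finset ℕ) : Prop :=
  ∃ a b : ℕ, lo ≤ a ∧ a ≤ b ∧ b ≤ hi ∧ S = Finset.Icc a b

/-- All laminar families of nonempty intervals inside `[lo,hi]`. -/
noncomputable def famsP (lo hi : ℕ) : Finset (Finset (Finset ℕ)) :=
  ((Finset.Icc lo hi).powerset.powerset).filter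
    fun fam => (∀ S ∈ fam, IsIntvIn lo hi S) ∧ Lam fam

/-- Those containing the full interval `[lo,hi]`. -/
noncomputable def famsQ (lo hi : ℕ) : Finset (Finset (Finset ℕ)) :=
  (famsP lo hi).filter fun fam => Finset.Icc lo hi ∈ fam

lemma mem_famsP {lo hi : ℕ} {fam : Finset (Finset ℕ)} :
    fam ∈ famsP lo hi ↔ (∀ S ∈ fam, IsIntvIn lo hi S) ∧ Lam fam := by
  unfold famsP
  simp only [Finset.mem_filter, Finset.mem_powerset, and_iff_right_iff_imp]
  rintro ⟨h1, h2⟩ S hS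
  rw [Finset.mem_powerset]
  obtain ⟨a, b, ha, hab, hb, rfl⟩ := h1 S hS
  exact Finset.Icc_subset_Icc ha hb

lemma mem_famsQ {lo hi : ℕ} {fam : Finset (Finset ℕ)} :
    fam ∈ famsQ lo hi ↔ ((∀ S ∈ fam, IsIntvIn lo hi S) ∧ Lam fam) ∧
      Finset.Icc lo hi ∈ fam := by
  unfold famsQ
  rw [Finset.mem_filter, mem_famsP]

lemma aCount_eq (n : ℕ) : aCount n = (famsQ 1 n).card := by
  rw [aCount, ← Set.ncard_coe_finset]
  congr 1
  ext fam
  simp only [Set.mem_setOf_eq, Finset.coe_sort_coe, Finset.mem_coe, mem_famsQ]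
  constructor
  · rintro ⟨⟨h1, h2, h3⟩, h4⟩
    refine ⟨⟨fun S hS => ?_, h3⟩, h2⟩
    obtain ⟨a, b, rfl⟩ := h4 S hS
    obtain ⟨hne, hsub⟩ := h1 _ hS
    obtain ⟨x, hx⟩ := hne
    have hx' := hx
    rw [Finset.mem_Icc] at hx
    have hab : a ≤ b := le_trans hx.1 hx.2
    have ha : a ∈ Finset.Icc a b := Finset.mem_Icc.2 ⟨le_refl a, hab⟩
    have hb : b ∈ Finset.Icc a b := Finset.mem_Icc.2 ⟨hab, le_refl b⟩
    have ha' := Finset.mem_Icc.1 (hsub ha)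
    have hb' := Finset.mem_Icc.1 (hsub hb)
    exact ⟨a, b, ha'.1, hab, hb'.2, rfl⟩
  · rintro ⟨⟨h1, h2⟩, h3⟩
    refine ⟨⟨fun S hS => ?_, h3, h2⟩, fun S hS => ?_⟩
    · obtain ⟨a, b, ha, hab, hb, rfl⟩ := h1 S hS
      exact ⟨Finset.nonempty_Icc.2 hab, Finset.Icc_subset_Icc ha hb⟩
    · obtain ⟨a, b, _, _, _, rfl⟩ := h1 S hS
      exact ⟨a, b, rfl⟩

lemma famsQ_zero : famsQ 1 0 = ∅ := by
  ext fam
  simp only [mem_famsQ, Finset.notMem_empty, iff_false]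
  rintro ⟨⟨h1, _⟩, h2⟩
  obtain ⟨a, b, ha, hab, hb, _⟩ := h1 _ h2
  omega

lemma famsQ_one : famsQ 1 1 = {{Finset.Icc 1 1}} := by
  ext fam
  simp only [mem_famsQ, Finset.mem_singleton]
  constructor
  · rintro ⟨⟨h1, _⟩, h2⟩
    apply Finset.eq_singleton_iff_unique_mem.2
    refine ⟨h2, fun S hS => ?_⟩
    obtain ⟨a, b, ha, hab, hb, rfl⟩ := h1 S hS
    have : a = 1 := le_antisymm (le_trans hab hb) ha
    have : b = 1 := by omega
    subst_vars; rfl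
  · rintro rfl
    refine ⟨⟨fun S hS => ?_, fun S hS T hT => ?_⟩, Finset.mem_singleton_self _⟩
    · rw [Finset.mem_singleton] at hS
      exact ⟨1, 1, le_refl _, le_refl _, le_refl _, hS⟩
    · rw [Finset.mem_singleton] at hS hT
      subst_vars; exact Or.inl (le_refl _)

end Aux
section Aux2

lemma card_famsP (lo hi : ℕ) (h : lo ≤ hi) :
    (famsP lo hi).card = 2 * (famsQ lo hi).card := by
  have hsplit := Finset.card_filter_add_card_filter_not
    (s := famsP lo hi) (p := fun fam => Finset.Icc lo hi ∈ fam)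
  have h1 : (famsP lo hi).filter (fun fam => Finset.Icc lo hi ∈ fam) = famsQ lo hi := rfl
  have h2 : ((famsP lo hi).filter fun fam => ¬ Finset.Icc lo hi ∈ fam).card
      = (famsQ lo hi).card := by
    apply Finset.card_nbij' (fun fam => insert (Finset.Icc lo hi) fam)
      (fun fam => fam.erase (Finset.Icc lo hi))
    · intro fam hfam
      rw [Finset.mem_coe, Finset.mem_filter, mem_famsP] at hfam
      obtain ⟨⟨hint, hlam⟩, hnot⟩ := hfam
      rw [Finset.mem_coe, mem_famsQ]
      refine ⟨⟨fun S hS => ?_, fun S hS T hT => ?_⟩, Finset.mem_insert_self _ _⟩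
      · rcases Finset.mem_insert.1 hS with rfl | hS
        · exact ⟨lo, hi, le_refl _, h, le_refl _, rfl⟩
        · exact hint S hS
      · have hsub : ∀ U ∈ fam, U ⊆ Finset.Icc lo hi := by
          intro U hU
          obtain ⟨a, b, ha, hab, hb, rfl⟩ := hint U hU
          exact Finset.Icc_subset_Icc ha hb
        rcases Finset.mem_insert.1 hS with rfl | hS
        · rcases Finset.mem_insert.1 hT with rfl | hT
          · exact Or.inl (le_refl _)
          · exact Or.inr (Or.inl (hsub T hT))
        · rcases Finset.mem_insert.1 hT with rfl | hT
          · exact Or.inl (hsub S hS)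
          · exact hlam S hS T hT
    · intro fam hfam
      rw [Finset.mem_coe, mem_famsQ] at hfam
      obtain ⟨⟨hint, hlam⟩, hmem⟩ := hfam
      rw [Finset.mem_coe, Finset.mem_filter, mem_famsP]
      exact ⟨⟨fun S hS => hint S (Finset.mem_of_mem_erase hS),
        fun S hS T hT => hlam S (Finset.mem_of_mem_erase hS) T (Finset.mem_of_mem_erase hT)⟩,
        Finset.notMem_erase _ _⟩
    · intro fam hfam
      rw [Finset.mem_coe, Finset.mem_filter] at hfam
      exact Finset.erase_insert hfam.2
    · intro fam hfam
      rw [Finset.mem_coe, mem_famsQ] at hfam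
      exact Finset.insert_erase hfam.2
  rw [h1, h2] at hsplit
  omega

lemma image_add_Icc (a b d : ℕ) : (Finset.Icc a b).image (· + d) = Finset.Icc (a + d) (b + d) := by
  ext x
  simp only [Finset.mem_image, Finset.mem_Icc]
  constructor
  · rintro ⟨y, hy, rfl⟩; omega
  · intro hx; exact ⟨x - d, by omega, by omega⟩

lemma image_sub_Icc (a b d : ℕ) (hd : d ≤ a) (hab : a ≤ b) :
    (Finset.Icc a b).image (· - d) = Finset.Icc (a - d) (b - d) := by
  ext x
  simp only [Finset.mem_image, Finset.mem_Icc]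
  constructor
  · rintro ⟨y, hy, rfl⟩; omega
  · intro hx; exact ⟨x + d, by omega, by omega⟩

lemma img_roundtrip1 (S : Finset ℕ) (d : ℕ) : (S.image (· + d)).image (· - d) = S := by
  ext y
  simp only [Finset.mem_image]
  constructor
  · rintro ⟨x, ⟨z, hz, rfl⟩, rfl⟩
    simpa [Nat.add_sub_cancel] using hz
  · intro hy
    exact ⟨y + d, ⟨y, hy, rfl⟩, by omega⟩

lemma img_roundtrip2 (S : Finset ℕ) (d : ℕ) (h : ∀ x ∈ S, d ≤ x) :
    (S.image (· - d)).image (· + d) = S := by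
  ext y
  simp only [Finset.mem_image]
  constructor
  · rintro ⟨x, ⟨z, hz, rfl⟩, rfl⟩
    have := h z hz
    rwa [show z - d + d = z from by omega]
  · intro hy
    have := h y hy
    exact ⟨y - d, ⟨y, hy, rfl⟩, by omega⟩

lemma shift_mem_back {lo hi d : ℕ} {fam : Finset (Finset ℕ)} (hfam : fam ∈ famsP lo hi) :
    fam.image (·.image (· + d)) ∈ famsP (lo + d) (hi + d) := by
  rw [mem_famsP] at hfam ⊢
  obtain ⟨hint, hlam⟩ := hfam
  have hinj : Function.Injective (· + d : ℕ → ℕ) := add_left_injective d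
  constructor
  · intro S' hS'
    obtain ⟨S, hS, rfl⟩ := Finset.mem_image.1 hS'
    obtain ⟨a, b, ha, hab, hb, rfl⟩ := hint S hS
    exact ⟨a + d, b + d, by omega, by omega, by omega, image_add_Icc a b d⟩
  · intro S' hS' T' hT'
    obtain ⟨S, hS, rfl⟩ := Finset.mem_image.1 hS'
    obtain ⟨T, hT, rfl⟩ := Finset.mem_image.1 hT'
    rcases hlam S hS T hT with h | h | h
    · exact Or.inl (Finset.image_subset_image h)
    · exact Or.inr (Or.inl (Finset.image_subset_image h))
    · exact Or.inr (Or.inr ((Finset.disjoint_image hinj).2 h))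

lemma shift_mem_fwd {lo hi d : ℕ} {fam : Finset (Finset ℕ)} (hd : 1 ≤ lo)
    (hfam : fam ∈ famsP (lo + d) (hi + d)) :
    fam.image (·.image (· - d)) ∈ famsP lo hi := by
  rw [mem_famsP] at hfam ⊢
  obtain ⟨hint, hlam⟩ := hfam
  have hge : ∀ S ∈ fam, ∀ x ∈ S, d ≤ x := by
    intro S hS x hx
    obtain ⟨a, b, ha, hab, hb, rfl⟩ := hint S hS
    have := (Finset.mem_Icc.1 hx).1; omega
  constructor
  · intro S' hS'
    obtain ⟨S, hS, rfl⟩ := Finset.mem_image.1 hS'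
    obtain ⟨a, b, ha, hab, hb, rfl⟩ := hint S hS
    exact ⟨a - d, b - d, by omega, by omega, by omega, image_sub_Icc a b d (by omega) hab⟩
  · intro S' hS' T' hT'
    obtain ⟨S, hS, rfl⟩ := Finset.mem_image.1 hS'
    obtain ⟨T, hT, rfl⟩ := Finset.mem_image.1 hT'
    rcases hlam S hS T hT with h | h | h
    · exact Or.inl (Finset.image_subset_image h)
    · exact Or.inr (Or.inl (Finset.image_subset_image h))
    · refine Or.inr (Or.inr (Finset.disjoint_left.2 ?_))
      intro x hxS hxT
      obtain ⟨s, hs, rfl⟩ := Finset.mem_image.1 hxS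
      obtain ⟨t, ht, hts⟩ := Finset.mem_image.1 hxT
      have h1 := hge S hS s hs
      have h2 := hge T hT t ht
      have : t = s := by omega
      subst this
      exact Finset.disjoint_left.1 h (hs) ht

lemma fam_roundtrip1 (fam : Finset (Finset ℕ)) (d : ℕ) :
    (fam.image (·.image (· + d))).image (·.image (· - d)) = fam := by
  ext T
  simp only [Finset.mem_image]
  constructor
  · rintro ⟨S, ⟨U, hU, rfl⟩, rfl⟩
    rwa [img_roundtrip1]
  · intro hT
    exact ⟨T.image (· + d), ⟨T, hT, rfl⟩, img_roundtrip1 T d⟩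

lemma fam_roundtrip2 {lo hi d : ℕ} (fam : Finset (Finset ℕ)) (hd : 1 ≤ lo)
    (hint : ∀ S ∈ fam, IsIntvIn (lo + d) (hi + d) S) :
    (fam.image (·.image (· - d))).image (·.image (· + d)) = fam := by
  have key : ∀ S ∈ fam, (S.image (· - d)).image (· + d) = S := by
    intro S hS
    apply img_roundtrip2
    intro x hx
    obtain ⟨a, b, ha, hab, hb, rfl⟩ := hint S hS
    have := (Finset.mem_Icc.1 hx).1; omega
  ext T
  simp only [Finset.mem_image]
  constructor
  · rintro ⟨S, ⟨U, hU, rfl⟩, rfl⟩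
    rwa [key U hU]
  · intro hT
    exact ⟨T.image (· - d), ⟨T, hT, rfl⟩, key T hT⟩

lemma card_famsP_shift (d m : ℕ) : (famsP (1 + d) (m + d)).card = (famsP 1 m).card := by
  apply Finset.card_nbij' (fun fam => fam.image (·.image (· - d)))
    (fun fam => fam.image (·.image (· + d)))
  · intro fam hfam
    exact shift_mem_fwd (le_refl 1) hfam
  · intro fam hfam
    exact shift_mem_back hfam
  · intro fam hfam
    rw [Finset.mem_coe, mem_famsP] at hfam
    exact fam_roundtrip2 fam (le_refl 1) hfam.1
  · intro fam hfam
    exact fam_roundtrip1 fam d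

lemma card_famsQ_shift (d m : ℕ) : (famsQ (1 + d) (m + d)).card = (famsQ 1 m).card := by
  apply Finset.card_nbij' (fun fam => fam.image (·.image (· - d)))
    (fun fam => fam.image (·.image (· + d)))
  · intro fam hfam
    rw [Finset.mem_coe, mem_famsQ] at hfam ⊢
    have h1 := shift_mem_fwd (le_refl 1) (mem_famsP.2 hfam.1)
    rw [mem_famsP] at h1
    refine ⟨h1, ?_⟩
    have : (Finset.Icc (1 + d) (m + d)).image (· - d) = Finset.Icc 1 m := by
      rcases le_or_gt 1 m with hm | hm
      · rw [image_sub_Icc _ _ _ (by omega) (by omega)]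
        congr 1 <;> omega
      · interval_cases m
        simp
    rw [← this]
    exact Finset.mem_image_of_mem _ hfam.2
  · intro fam hfam
    rw [Finset.mem_coe, mem_famsQ] at hfam ⊢
    have h1 := shift_mem_back (d := d) (mem_famsP.2 hfam.1)
    rw [mem_famsP] at h1
    refine ⟨h1, ?_⟩
    have : (Finset.Icc 1 m).image (· + d) = Finset.Icc (1 + d) (m + d) := image_add_Icc 1 m d
    rw [← this]
    exact Finset.mem_image_of_mem _ hfam.2
  · intro fam hfam
    rw [Finset.mem_coe, mem_famsQ] at hfam
    exact fam_roundtrip2 fam (le_refl 1) hfam.1.1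
  · intro fam hfam
    exact fam_roundtrip1 fam d

end Aux2
section Aux3

lemma Icc_sup_id {a b : ℕ} (h : a ≤ b) : (Finset.Icc a b).sup id = b := by
  apply le_antisymm
  · exact Finset.sup_le fun x hx => (Finset.mem_Icc.1 hx).2
  · exact Finset.le_sup (f := id) (Finset.mem_Icc.2 ⟨h, le_refl b⟩)

/-- The right endpoint of the largest member containing `1` other than the root. -/
noncomputable def Kof (n : ℕ) (fam : Finset (Finset ℕ)) : ℕ :=
  ((fam.erase (Finset.Icc 1 n)).filter fun T => 1 ∈ T).sup fun T => T.sup id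

lemma Kof_lt {n : ℕ} (hn : 1 ≤ n) {fam : Finset (Finset ℕ)} (hfam : fam ∈ famsQ 1 n) :
    Kof n fam < n := by
  rw [mem_famsQ] at hfam
  obtain ⟨⟨hint, _⟩, _⟩ := hfam
  apply Finset.sup_lt_iff (show (⊥ : ℕ) < n by rw [Nat.bot_eq_zero]; omega) |>.2
  intro T hT
  rw [Finset.mem_filter, Finset.mem_erase] at hT
  obtain ⟨⟨hne, hmem⟩, h1⟩ := hT
  obtain ⟨a, b, ha, hab, hb, rfl⟩ := hint T hmem
  have ha1 : a = 1 := le_antisymm ((Finset.mem_Icc.1 h1).1) ha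
  subst ha1
  rw [Icc_sup_id hab]
  rcases Nat.lt_or_ge b n with h | h
  · exact h
  · exact absurd (by rw [le_antisymm hb h]) hne

lemma Kof_structure {n : ℕ} {fam : Finset (Finset ℕ)} (hfam : fam ∈ famsQ 1 n)
    (hk : 1 ≤ Kof n fam) :
    Finset.Icc 1 (Kof n fam) ∈ fam ∧
    ∀ S ∈ fam, S ≠ Finset.Icc 1 n →
      S ⊆ Finset.Icc 1 (Kof n fam) ∨ S ⊆ Finset.Icc (Kof n fam + 1) n := by
  rw [mem_famsQ] at hfam
  obtain ⟨⟨hint, hlam⟩, hroot⟩ := hfam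
  set F := (fam.erase (Finset.Icc 1 n)).filter fun T => 1 ∈ T with hF
  have hne : F.Nonempty := by
    rcases F.eq_empty_or_nonempty with h | h
    · exfalso
      have : Kof n fam = 0 := by rw [Kof, ← hF, h]; rfl
      omega
    · exact h
  obtain ⟨T, hT, hsup⟩ := Finset.exists_mem_eq_sup F hne fun T => T.sup id
  rw [hF, Finset.mem_filter, Finset.mem_erase] at hT
  obtain ⟨⟨hTne, hTmem⟩, hT1⟩ := hT
  obtain ⟨a, b, ha, hab, hb, rfl⟩ := hint _ hTmem
  have ha1 : a = 1 := le_antisymm ((Finset.mem_Icc.1 hT1).1) ha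
  subst ha1
  have hKb : Kof n fam = b := by rw [Kof, ← hF, hsup, Icc_sup_id hab]
  constructor
  · rw [hKb]; exact hTmem
  · intro S hS hSne
    obtain ⟨c, d, hc, hcd, hd, rfl⟩ := hint S hS
    by_cases h1 : (1 : ℕ) ∈ Finset.Icc c d
    · left
      have hc1 : c = 1 := le_antisymm ((Finset.mem_Icc.1 h1).1) hc
      subst hc1
      have hmemF : Finset.Icc 1 d ∈ F := by
        rw [hF, Finset.mem_filter, Finset.mem_erase]
        exact ⟨⟨hSne, hS⟩, h1⟩
      have : (Finset.Icc 1 d).sup id ≤ Kof n fam := Finset.le_sup (f := fun T => T.sup id) hmemF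
      rw [Icc_sup_id hcd] at this
      exact Finset.Icc_subset_Icc (le_refl 1) this
    · have hc2 : 2 ≤ c := by
        rcases Nat.lt_or_ge c 2 with h | h
        · exfalso; apply h1; rw [Finset.mem_Icc]; omega
        · exact h
      rcases hlam _ hS _ (hKb ▸ hTmem) with h | h | h
      · left; exact h
      · exfalso
        apply h1
        apply h
        rw [Finset.mem_Icc]; omega
      · right
        intro x hx
        rw [Finset.mem_Icc] at hx ⊢
        refine ⟨?_, by omega⟩
        by_contra hcon
        exact Finset.disjoint_left.1 h (Finset.mem_Icc.2 hx)
          (Finset.mem_Icc.2 ⟨by omega, by omega⟩)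

lemma Kof_zero_structure {n : ℕ} {fam : Finset (Finset ℕ)} (hfam : fam ∈ famsQ 1 n)
    (hk : Kof n fam = 0) :
    ∀ S ∈ fam, S ≠ Finset.Icc 1 n → S ⊆ Finset.Icc 2 n := by
  rw [mem_famsQ] at hfam
  obtain ⟨⟨hint, _⟩, _⟩ := hfam
  intro S hS hSne
  obtain ⟨a, b, ha, hab, hb, rfl⟩ := hint S hS
  by_cases h1 : (1 : ℕ) ∈ Finset.Icc a b
  · exfalso
    have hmemF : Finset.Icc a b ∈ (fam.erase (Finset.Icc 1 n)).filter fun T => 1 ∈ T := by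
      rw [Finset.mem_filter, Finset.mem_erase]
      exact ⟨⟨hSne, hS⟩, h1⟩
    have h2 : (Finset.Icc a b).sup id ≤ Kof n fam :=
      Finset.le_sup (f := fun T => T.sup id) hmemF
    rw [Icc_sup_id hab, hk] at h2
    have := (Finset.mem_Icc.1 h1).2
    omega
  · have : 2 ≤ a := by
      rcases Nat.lt_or_ge a 2 with h | h
      · exfalso; apply h1; rw [Finset.mem_Icc]; omega
      · exact h
    exact Finset.Icc_subset_Icc this hb

end Aux3
section Aux4

lemma IsIntvIn.subset {lo hi : ℕ} {S : Finset ℕ} (h : IsIntvIn lo hi S) :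
    S ⊆ Finset.Icc lo hi := by
  obtain ⟨a, b, ha, hab, hb, rfl⟩ := h
  exact Finset.Icc_subset_Icc ha hb

lemma lam_insert_root {lo hi : ℕ} {fam : Finset (Finset ℕ)}
    (h : ∀ S ∈ fam, S ⊆ Finset.Icc lo hi) (hlam : Lam fam) :
    Lam (insert (Finset.Icc lo hi) fam) := by
  intro S hS T hT
  rcases Finset.mem_insert.1 hS with rfl | hS
  · rcases Finset.mem_insert.1 hT with rfl | hT
    · exact Or.inl (le_refl _)
    · exact Or.inr (Or.inl (h T hT))
  · rcases Finset.mem_insert.1 hT with rfl | hT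
    · exact Or.inl (h S hS)
    · exact hlam S hS T hT

lemma fiber_zero_card {n : ℕ} (hn : 1 ≤ n) :
    ((famsQ 1 n).filter fun fam => Kof n fam = 0).card = (famsP 2 n).card := by
  apply Finset.card_nbij' (fun fam => fam.erase (Finset.Icc 1 n))
    (fun R => insert (Finset.Icc 1 n) R)
  · intro fam hfam
    rw [Finset.mem_coe, Finset.mem_filter] at hfam
    obtain ⟨hQ, hK⟩ := hfam
    have hstruct := Kof_zero_structure hQ hK
    rw [mem_famsQ] at hQ
    obtain ⟨⟨hint, hlam⟩, hroot⟩ := hQ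
    rw [Finset.mem_coe, mem_famsP]
    constructor
    · intro S hS
      rw [Finset.mem_erase] at hS
      have hsub := hstruct S hS.2 hS.1
      obtain ⟨a, b, ha, hab, hb, rfl⟩ := hint S hS.2
      have : 2 ≤ a := by
        have := hsub (Finset.mem_Icc.2 ⟨le_refl a, hab⟩)
        exact (Finset.mem_Icc.1 this).1
      exact ⟨a, b, this, hab, hb, rfl⟩
    · intro S hS T hT
      exact hlam S (Finset.mem_of_mem_erase hS) T (Finset.mem_of_mem_erase hT)
  · intro R hR
    rw [Finset.mem_coe, mem_famsP] at hR
    obtain ⟨hint, hlam⟩ := hR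
    have hone : ∀ S ∈ R, (1 : ℕ) ∉ S := by
      intro S hS h1
      obtain ⟨a, b, ha, hab, hb, rfl⟩ := hint S hS
      have := (Finset.mem_Icc.1 h1).1
      omega
    have hnotin : Finset.Icc 1 n ∉ R := fun h =>
      hone _ h (Finset.mem_Icc.2 ⟨le_refl 1, hn⟩)
    rw [Finset.mem_coe, Finset.mem_filter, mem_famsQ]
    refine ⟨⟨⟨fun S hS => ?_, ?_⟩, Finset.mem_insert_self _ _⟩, ?_⟩
    · rcases Finset.mem_insert.1 hS with rfl | hS
      · exact ⟨1, n, le_refl _, hn, le_refl _, rfl⟩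
      · obtain ⟨a, b, ha, hab, hb, rfl⟩ := hint S hS
        exact ⟨a, b, by omega, hab, hb, rfl⟩
    · apply lam_insert_root _ hlam
      intro S hS
      exact (IsIntvIn.subset (hint S hS)).trans (Finset.Icc_subset_Icc (by omega) (le_refl n))
    · rw [Kof, Finset.erase_insert hnotin]
      have : R.filter (fun T => 1 ∈ T) = ∅ :=
        Finset.filter_eq_empty_iff.2 fun {S} hS => hone S hS
      rw [this, Finset.sup_empty]
      rfl
  · intro fam hfam
    rw [Finset.mem_coe, Finset.mem_filter, mem_famsQ] at hfam
    exact Finset.insert_erase hfam.1.2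
  · intro R hR
    rw [Finset.mem_coe, mem_famsP] at hR
    apply Finset.erase_insert
    intro h
    obtain ⟨a, b, ha, hab, hb, hEq⟩ := hR.1 _ h
    have : (1 : ℕ) ∈ Finset.Icc a b := hEq ▸ Finset.mem_Icc.2 ⟨le_refl 1, hn⟩
    have := (Finset.mem_Icc.1 this).1
    omega

end Aux4
section Aux5

lemma fiber_card {n k : ℕ} (hk1 : 1 ≤ k) (hkn : k < n) :
    ((famsQ 1 n).filter fun fam => Kof n fam = k).card
      = ((famsQ 1 k) ×ˢ (famsP (k + 1) n)).card := by
  have hdisj : Disjoint (Finset.Icc 1 k) (Finset.Icc (k + 1) n) := by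
    rw [Finset.disjoint_left]
    intro x hx hx'
    rw [Finset.mem_Icc] at hx hx'
    omega
  apply Finset.card_nbij'
    (fun fam => (fam.filter (· ⊆ Finset.Icc 1 k), fam.filter (· ⊆ Finset.Icc (k + 1) n)))
    (fun p => insert (Finset.Icc 1 n) (p.1 ∪ p.2))
  · -- forward membership
    intro fam hfam
    rw [Finset.mem_coe, Finset.mem_filter] at hfam
    obtain ⟨hQ, hK⟩ := hfam
    have hstruct := Kof_structure hQ (hK ▸ hk1)
    rw [hK] at hstruct
    obtain ⟨hIk, htri⟩ := hstruct
    rw [mem_famsQ] at hQ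
    obtain ⟨⟨hint, hlam⟩, hroot⟩ := hQ
    rw [Finset.mem_coe, Finset.mem_product]
    constructor
    · rw [mem_famsQ]
      refine ⟨⟨fun S hS => ?_, fun S hS T hT => ?_⟩, ?_⟩
      · rw [Finset.mem_filter] at hS
        obtain ⟨a, b, ha, hab, hb, rfl⟩ := hint S hS.1
        have hbk : b ≤ k :=
          (Finset.mem_Icc.1 (hS.2 (Finset.mem_Icc.2 ⟨hab, le_refl b⟩))).2
        exact ⟨a, b, ha, hab, hbk, rfl⟩
      · rw [Finset.mem_filter] at hS hT
        exact hlam S hS.1 T hT.1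
      · exact Finset.mem_filter.2 ⟨hIk, le_refl _⟩
    · rw [mem_famsP]
      refine ⟨fun S hS => ?_, fun S hS T hT => ?_⟩
      · rw [Finset.mem_filter] at hS
        obtain ⟨a, b, ha, hab, hb, rfl⟩ := hint S hS.1
        have hak : k + 1 ≤ a :=
          (Finset.mem_Icc.1 (hS.2 (Finset.mem_Icc.2 ⟨le_refl a, hab⟩))).1
        exact ⟨a, b, hak, hab, hb, rfl⟩
      · rw [Finset.mem_filter] at hS hT
        exact hlam S hS.1 T hT.1
  · -- backward membership
    rintro ⟨L, R⟩ hp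
    rw [Finset.mem_coe, Finset.mem_product] at hp
    obtain ⟨hL, hR⟩ := hp
    rw [mem_famsQ] at hL
    obtain ⟨⟨hLint, hLlam⟩, hLroot⟩ := hL
    rw [mem_famsP] at hR
    obtain ⟨hRint, hRlam⟩ := hR
    have hLsub : ∀ S ∈ L, S ⊆ Finset.Icc 1 k := fun S hS => (hLint S hS).subset
    have hRsub : ∀ S ∈ R, S ⊆ Finset.Icc (k + 1) n := fun S hS => (hRint S hS).subset
    have hsubroot : ∀ S ∈ L ∪ R, S ⊆ Finset.Icc 1 n := by
      intro S hS
      rcases Finset.mem_union.1 hS with hS | hS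
      · exact (hLsub S hS).trans (Finset.Icc_subset_Icc (le_refl 1) (by omega))
      · exact (hRsub S hS).trans (Finset.Icc_subset_Icc (by omega) (le_refl n))
    have hnotin : Finset.Icc 1 n ∉ L ∪ R := by
      intro h
      rcases Finset.mem_union.1 h with h | h
      · have := hLsub _ h (Finset.mem_Icc.2 ⟨by omega, le_refl n⟩)
        have := (Finset.mem_Icc.1 this).2
        omega
      · have := hRsub _ h (Finset.mem_Icc.2 ⟨le_refl 1, by omega⟩)
        have := (Finset.mem_Icc.1 this).1
        omega
    rw [Finset.mem_coe, Finset.mem_filter, mem_famsQ]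
    refine ⟨⟨⟨fun S hS => ?_, ?_⟩, Finset.mem_insert_self _ _⟩, ?_⟩
    · rcases Finset.mem_insert.1 hS with rfl | hS
      · exact ⟨1, n, le_refl _, by omega, le_refl _, rfl⟩
      · rcases Finset.mem_union.1 hS with hS | hS
        · obtain ⟨a, b, ha, hab, hb, rfl⟩ := hLint S hS
          exact ⟨a, b, ha, hab, by omega, rfl⟩
        · obtain ⟨a, b, ha, hab, hb, rfl⟩ := hRint S hS
          exact ⟨a, b, by omega, hab, hb, rfl⟩
    · apply lam_insert_root hsubroot
      intro S hS T hT
      rcases Finset.mem_union.1 hS with hS' | hS'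
      · rcases Finset.mem_union.1 hT with hT' | hT'
        · exact hLlam S hS' T hT'
        · exact Or.inr (Or.inr (hdisj.mono (hLsub S hS') (hRsub T hT')))
      · rcases Finset.mem_union.1 hT with hT' | hT'
        · exact Or.inr (Or.inr ((hdisj.symm).mono (hRsub S hS') (hLsub T hT')))
        · exact hRlam S hS' T hT'
    · -- Kof = k
      rw [Kof, Finset.erase_insert hnotin]
      apply le_antisymm
      · apply Finset.sup_le
        intro T hT
        rw [Finset.mem_filter] at hT
        obtain ⟨hTmem, hT1⟩ := hT
        rcases Finset.mem_union.1 hTmem with hT' | hT'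
        · apply Finset.sup_le
          intro x hx
          exact (Finset.mem_Icc.1 (hLsub T hT' hx)).2
        · exfalso
          have := (Finset.mem_Icc.1 (hRsub T hT' hT1)).1
          omega
      · have hmem : Finset.Icc 1 k ∈ (L ∪ R).filter fun T => 1 ∈ T := by
          rw [Finset.mem_filter]
          exact ⟨Finset.mem_union_left _ hLroot, Finset.mem_Icc.2 ⟨le_refl 1, hk1⟩⟩
        have := Finset.le_sup (f := fun T => T.sup id) hmem
        simpa [Icc_sup_id hk1] using this
  · -- left inverse
    intro fam hfam
    rw [Finset.mem_coe, Finset.mem_filter] at hfam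
    obtain ⟨hQ, hK⟩ := hfam
    have hstruct := Kof_structure hQ (hK ▸ hk1)
    rw [hK] at hstruct
    obtain ⟨hIk, htri⟩ := hstruct
    rw [mem_famsQ] at hQ
    obtain ⟨⟨hint, hlam⟩, hroot⟩ := hQ
    apply Finset.Subset.antisymm
    · intro S hS
      rcases Finset.mem_insert.1 hS with rfl | hS
      · exact hroot
      · rcases Finset.mem_union.1 hS with hS | hS
        · exact (Finset.mem_filter.1 hS).1
        · exact (Finset.mem_filter.1 hS).1
    · intro S hS
      by_cases hSe : S = Finset.Icc 1 n
      · exact hSe ▸ Finset.mem_insert_self _ _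
      · rcases htri S hS hSe with h | h
        · exact Finset.mem_insert_of_mem
            (Finset.mem_union_left _ (Finset.mem_filter.2 ⟨hS, h⟩))
        · exact Finset.mem_insert_of_mem
            (Finset.mem_union_right _ (Finset.mem_filter.2 ⟨hS, h⟩))
  · -- right inverse
    rintro ⟨L, R⟩ hp
    rw [Finset.mem_coe, Finset.mem_product] at hp
    obtain ⟨hL, hR⟩ := hp
    rw [mem_famsQ] at hL
    obtain ⟨⟨hLint, hLlam⟩, hLroot⟩ := hL
    rw [mem_famsP] at hR
    obtain ⟨hRint, hRlam⟩ := hR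
    have hrootL : ¬ Finset.Icc 1 n ⊆ Finset.Icc 1 k := by
      intro h
      have := (Finset.mem_Icc.1 (h (Finset.mem_Icc.2 ⟨by omega, le_refl n⟩))).2
      omega
    have hrootR : ¬ Finset.Icc 1 n ⊆ Finset.Icc (k + 1) n := by
      intro h
      have := (Finset.mem_Icc.1 (h (Finset.mem_Icc.2 ⟨le_refl 1, by omega⟩))).1
      omega
    have hLnotR : ∀ S ∈ L, ¬ S ⊆ Finset.Icc (k + 1) n := by
      intro S hS h
      obtain ⟨a, b, ha, hab, hb, rfl⟩ := hLint S hS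
      have h1 := (Finset.mem_Icc.1 (h (Finset.mem_Icc.2 ⟨le_refl a, hab⟩))).1
      omega
    have hRnotL : ∀ S ∈ R, ¬ S ⊆ Finset.Icc 1 k := by
      intro S hS h
      obtain ⟨a, b, ha, hab, hb, rfl⟩ := hRint S hS
      have h1 := (Finset.mem_Icc.1 (h (Finset.mem_Icc.2 ⟨le_refl a, hab⟩))).2
      omega
    have e1 : (insert (Finset.Icc 1 n) (L ∪ R)).filter (· ⊆ Finset.Icc 1 k) = L := by
      ext S
      rw [Finset.mem_filter, Finset.mem_insert, Finset.mem_union]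
      constructor
      · rintro ⟨rfl | hS | hS, hsub⟩
        · exact absurd hsub hrootL
        · exact hS
        · exact absurd hsub (hRnotL S hS)
      · intro hS
        exact ⟨Or.inr (Or.inl hS), (hLint S hS).subset⟩
    have e2 : (insert (Finset.Icc 1 n) (L ∪ R)).filter (· ⊆ Finset.Icc (k + 1) n) = R := by
      ext S
      rw [Finset.mem_filter, Finset.mem_insert, Finset.mem_union]
      constructor
      · rintro ⟨rfl | hS | hS, hsub⟩
        · exact absurd hsub hrootR
        · exact absurd hsub (hLnotR S hS)
        · exact hS
      · intro hS
        exact ⟨Or.inr (Or.inr hS), (hRint S hS).subset⟩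
    exact Prod.ext e1 e2

end Aux5
section Aux6

lemma card_rec {n : ℕ} (hn : 2 ≤ n) :
    (famsQ 1 n).card = (famsP 2 n).card
      + ∑ k ∈ Finset.Ico 1 n, (famsQ 1 k).card * (famsP (k + 1) n).card := by
  rw [Finset.card_eq_sum_card_fiberwise
    (f := Kof n) (t := Finset.range n)
    (fun fam hfam => Finset.mem_range.2 (Kof_lt (by omega) hfam))]
  rw [Finset.range_eq_Ico, Finset.sum_eq_sum_Ico_succ_bot (by omega : 0 < n)]
  congr 1
  · exact fiber_zero_card (by omega)
  · apply Finset.sum_congr rfl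
    intro k hk
    rw [Finset.mem_Ico] at hk
    rw [fiber_card hk.1 hk.2, Finset.card_product]

lemma aCount_rec {n : ℕ} (hn : 2 ≤ n) :
    aCount n = 2 * aCount (n - 1)
      + 2 * ∑ k ∈ Finset.Ico 1 n, aCount k * aCount (n - k) := by
  rw [aCount_eq, card_rec hn]
  have e0 : (famsP 2 n).card = 2 * aCount (n - 1) := by
    have h1 : famsP 2 n = famsP (1 + 1) ((n - 1) + 1) := by
      congr 1 <;> omega
    rw [h1, card_famsP_shift 1 (n - 1), card_famsP 1 (n - 1) (by omega), aCount_eq]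
  have e1 : ∀ k ∈ Finset.Ico 1 n,
      (famsQ 1 k).card * (famsP (k + 1) n).card = aCount k * (2 * aCount (n - k)) := by
    intro k hk
    rw [Finset.mem_Ico] at hk
    have h1 : famsP (k + 1) n = famsP (1 + k) ((n - k) + k) := by
      congr 1 <;> omega
    rw [h1, card_famsP_shift k (n - k), card_famsP 1 (n - k) (by omega),
      aCount_eq, aCount_eq]
  rw [e0, Finset.sum_congr rfl e1]
  rw [Finset.mul_sum]
  congr 1
  apply Finset.sum_congr rfl
  intro k _
  ring

lemma aCount_zero : aCount 0 = 0 := by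
  rw [aCount_eq 0, famsQ_zero, Finset.card_empty]

lemma aCount_one : aCount 1 = 1 := by
  rw [aCount_eq 1, famsQ_one, Finset.card_singleton]

lemma aCount_two : aCount 2 = 4 := by
  rw [aCount_rec (le_refl 2)]
  have : Finset.Ico 1 2 = {1} := rfl
  rw [this]
  simp [aCount_one]

lemma aCount_three : aCount 3 = 24 := by
  rw [aCount_rec (by omega : 2 ≤ 3)]
  have : Finset.Ico 1 3 = {1, 2} := rfl
  rw [this]
  simp [Finset.sum_insert, aCount_one, aCount_two]

lemma aCount_four : aCount 4 = 176 := by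
  rw [aCount_rec (by omega : 2 ≤ 4)]
  have : Finset.Ico 1 4 = {1, 2, 3} := rfl
  rw [this]
  simp [Finset.sum_insert, aCount_one, aCount_two, aCount_three]

end Aux6
/-- `a₁ = 1` and `a_n = 2a_{n-1} + 2∑_{k=1}^{n-1} a_k a_{n-k}` for
`n ≥ 2`; equivalently the ordinary generating series `F = ∑ a_n xⁿ` satisfies
`F = x + 2xF + 2F²`.  In particular `a₂ = 4`, `a₃ = 24`, `a₄ = 176`. -/
theorem bwts_generating_series :
    aCount 1 = 1 ∧ aCount 2 = 4 ∧ aCount 3 = 24 ∧ aCount 4 = 176 ∧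
    (∀ n : ℕ, 2 ≤ n →
      aCount n = 2 * aCount (n - 1)
        + 2 * ∑ k ∈ Finset.Ico 1 n, aCount k * aCount (n - k)) ∧
    (PowerSeries.mk fun n => (aCount n : ℚ))
      = PowerSeries.X + 2 * PowerSeries.X * (PowerSeries.mk fun n => (aCount n : ℚ))
        + 2 * (PowerSeries.mk fun n => (aCount n : ℚ)) ^ 2 := by
  refine ⟨aCount_one, aCount_two, aCount_three, aCount_four, fun n hn => aCount_rec hn, ?_⟩
  set F : PowerSeries ℚ := PowerSeries.mk fun n => (aCount n : ℚ) with hF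
  ext n
  have h2XF : 2 * PowerSeries.X * F = PowerSeries.X * F + PowerSeries.X * F := by ring
  have h2F2 : 2 * F ^ 2 = F * F + F * F := by ring
  rw [h2XF, h2F2, map_add, map_add, map_add, map_add, PowerSeries.coeff_mk]
  match n with
  | 0 =>
    simp only [PowerSeries.coeff_zero_eq_constantCoeff, map_mul,
      PowerSeries.constantCoeff_X, zero_mul, PowerSeries.constantCoeff_mk, hF]
    rw [aCount_zero]
    norm_num
  | 1 =>
    rw [PowerSeries.coeff_one_X, PowerSeries.coeff_succ_X_mul,
      PowerSeries.coeff_mul]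
    simp only [PowerSeries.coeff_mk, hF]
    rw [show Finset.HasAntidiagonal.antidiagonal 1 = {(0, 1), (1, 0)} from rfl]
    simp [aCount_zero, aCount_one]
  | (m + 2) =>
    rw [PowerSeries.coeff_X, if_neg (by omega), PowerSeries.coeff_succ_X_mul,
      PowerSeries.coeff_mul]
    simp only [PowerSeries.coeff_mk, hF]
    have hconv : (∑ p ∈ Finset.HasAntidiagonal.antidiagonal (m + 2),
        (aCount p.1 : ℚ) * (aCount p.2 : ℚ))
        = ∑ k ∈ Finset.Ico 1 (m + 2), (aCount k : ℚ) * (aCount (m + 2 - k) : ℚ) := by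
      rw [Finset.Nat.sum_antidiagonal_eq_sum_range_succ_mk]
      rw [Finset.range_eq_Ico, Finset.sum_eq_sum_Ico_succ_bot (by omega : 0 < m + 3)]
      rw [show m + 3 = (m + 2) + 1 from rfl, Finset.sum_Ico_succ_top (by omega : 1 ≤ m + 2)]
      simp [aCount_zero]
    rw [hconv]
    have hrec := aCount_rec (show 2 ≤ m + 2 by omega)
    have : (aCount (m + 2) : ℚ) = 2 * (aCount (m + 1) : ℚ)
        + 2 * ∑ k ∈ Finset.Ico 1 (m + 2), (aCount k : ℚ) * (aCount (m + 2 - k) : ℚ) := by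
      rw [hrec]
      push_cast
      ring_nf
    rw [this]
    ring
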